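/- For the continued fraction with partial denominators b₀ = T, b_n = -U^{-1}T (n odd ≥ 1), b_n = T (n even ≥ 2), with continuants r_n, s_n, the identity r_{2^n - 1}/s_{2^n - 1} - T = s_{2^n - 2}/s_{2^n - 1} holds in Q(T,U) for all n ≥ 1. -/
import Mathlib


noncomputable section
namespace Paper
open MvPolynomial Finset

abbrev K : Type := FractionRing (MvPolynomial (Fin 2) ℚ)

def T : K := algebraMap (MvPolynomial (Fin 2) ℚ) K (X 0)
def U : K := algebraMap (MvPolynomial (Fin 2) ℚ) K (X 1)

/-- The Newton iterator of `f = X² - T·X + U`. -/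
def F (x : K) : K := (x ^ 2 - U) / (2 * x - T)

/-- `h 0 = T`, `h (n+1) = h n ² - 2 U^(2^n)`. -/
def h : ℕ → K
  | 0 => T
  | n + 1 => h n ^ 2 - 2 * U ^ 2 ^ n

/-- Partial denominators: `a 0 = 0`, `a n = U⁻¹T` for odd `n`, `a n = -T` for even `n ≥ 2`. -/
def a (n : ℕ) : K := if n = 0 then 0 else if Odd n then U⁻¹ * T else -T

/-- Partial denominators: `b n = T` for even `n`, `b n = -U⁻¹T` for odd `n`. -/
def b (n : ℕ) : K := if Odd n then -(U⁻¹ * T) else T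

/-- Continuant numerators, shifted by 2: `P k = p_{k-2}`, so `P 0 = p_{-2} = 0`,
`P 1 = p_{-1} = 1`, `P (n+2) = p_n = a n • p_{n-1} + p_{n-2}`. -/
def P : ℕ → K
  | 0 => 0
  | 1 => 1
  | n + 2 => a n * P (n + 1) + P n

/-- Continuant denominators, shifted by 2: `Q k = q_{k-2}`. -/
def Q : ℕ → K
  | 0 => 1
  | 1 => 0
  | n + 2 => a n * Q (n + 1) + Q n

/-- Continuant numerators for the `b`-continued fraction, shifted by 2: `R k = r_{k-2}`. -/
def R : ℕ → K
  | 0 => 0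
  | 1 => 1
  | n + 2 => b n * R (n + 1) + R n

/-- Continuant denominators for the `b`-continued fraction, shifted by 2: `Sd k = s_{k-2}`. -/
def Sd : ℕ → K
  | 0 => 1
  | 1 => 0
  | n + 2 => b n * Sd (n + 1) + Sd n

lemma U_ne : U ≠ 0 := by
  simp only [U, ne_eq, map_eq_zero_iff _ (IsFractionRing.injective (MvPolynomial (Fin 2) ℚ) K)]
  exact X_ne_zero 1

lemma b_even (m : ℕ) : b (2 * m) = T := by simp [b, parity_simps]
lemma b_odd (m : ℕ) : b (2 * m + 1) = -(U⁻¹ * T) := by simp [b, parity_simps]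

abbrev Rg : Type := MvPolynomial (Fin 2) ℚ

def AC : ℕ → Rg × Rg
  | 0 => (0, 1)
  | m + 1 => ((X 1 - X 0 ^ 2) * (AC m).1 - X 0 * (AC m).2,
      X 0 * X 1 * (AC m).1 + X 1 * (AC m).2)
def AA (m : ℕ) : Rg := (AC m).1
def CC (m : ℕ) : Rg := (AC m).2
lemma AA_succ (m : ℕ) : AA (m+1) = (X 1 - X 0 ^ 2) * AA m - X 0 * CC m := rfl
lemma CC_succ (m : ℕ) : CC (m+1) = X 0 * X 1 * AA m + X 1 * CC m := rfl

lemma key (m : ℕ) : algebraMap Rg K (AA m) = U ^ m * Sd (2 * m + 1) ∧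
    algebraMap Rg K (CC m) = U ^ m * Sd (2 * m) := by
  induction m with
  | zero => simp [AA, CC, AC, Sd]
  | succ m ih =>
    obtain ⟨h1, h2⟩ := ih
    have e1 : Sd (2 * m + 2) = T * Sd (2 * m + 1) + Sd (2 * m) := by
      rw [show 2*m+2 = (2*m)+2 from rfl, Sd, b_even]
    have e2 : Sd (2 * m + 3) = -(U⁻¹ * T) * Sd (2 * m + 2) + Sd (2 * m + 1) := by
      rw [show 2*m+3 = (2*m+1)+2 from rfl, Sd, b_odd]
    constructor
    · rw [AA_succ, map_sub, map_mul, map_mul, map_sub, map_pow]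
      show (U - T^2) * _ - T * _ = _
      rw [h1, h2, show 2*(m+1)+1 = 2*m+3 from rfl, e2, e1]
      field_simp [U_ne]
      ring
    · rw [CC_succ, map_add, map_mul, map_mul, map_mul]
      show T * U * _ + U * _ = _
      rw [h1, h2, show 2*(m+1) = 2*m+2 from rfl, e1]
      ring

def φ : Rg →+* Polynomial ℚ :=
  (aeval (fun i : Fin 2 => if i = 0 then (Polynomial.X : Polynomial ℚ) else 0)).toRingHom

lemma phi_X0 : φ (X 0) = Polynomial.X := by simp [φ]
lemma phi_X1 : φ (X 1) = 0 := by simp [φ]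

lemma phi_C (m : ℕ) (hm : 1 ≤ m) : φ (CC m) = 0 := by
  obtain ⟨k, rfl⟩ := Nat.exists_eq_succ_of_ne_zero (by omega : m ≠ 0)
  rw [CC_succ, map_add, map_mul, map_mul, map_mul, phi_X1]
  ring

lemma phi_A (m : ℕ) (hm : 1 ≤ m) : φ (AA m) = (-1) ^ m * Polynomial.X ^ (2 * m - 1) := by
  induction m with
  | zero => omega
  | succ m ih =>
    rw [AA_succ, map_sub, map_mul, map_mul, map_sub, map_pow, phi_X0, phi_X1]
    rcases Nat.eq_zero_or_pos m with h0 | h1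
    · subst h0
      simp [AA, CC, AC]
    · rw [ih h1, phi_C m h1]
      have h2 : 2 * (m + 1) - 1 = (2 * m - 1) + 2 := by omega
      rw [h2]
      ring

lemma AA_ne (m : ℕ) (hm : 1 ≤ m) : AA m ≠ 0 := by
  intro h
  have h2 := phi_A m hm
  rw [h, map_zero] at h2
  exact (mul_ne_zero (pow_ne_zero _ (by norm_num))
    (pow_ne_zero _ Polynomial.X_ne_zero)) h2.symm

lemma Sd_ne (m : ℕ) (hm : 1 ≤ m) : Sd (2 * m + 1) ≠ 0 := by
  intro h
  have h1 := (key m).1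
  rw [h, mul_zero, map_eq_zero_iff _ (IsFractionRing.injective Rg K)] at h1
  exact AA_ne m hm h1

lemma D_pair (m : ℕ) : (R (2*m+2) - T * Sd (2*m+2) = -(U * Sd (2*m+1))) ∧
    (R (2*m+3) - T * Sd (2*m+3) = Sd (2*m+2)) := by
  have hUU : U * U⁻¹ = 1 := mul_inv_cancel₀ U_ne
  induction m with
  | zero =>
    constructor
    · show b 0 * R 1 + R 0 - T * (b 0 * Sd 1 + Sd 0) = -(U * Sd 1)
      rw [show b 0 = T from b_even 0]
      show T * 1 + 0 - T * (T * 0 + 1) = -(U * 0)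
      ring
    · show b 1 * R 2 + R 1 - T * (b 1 * Sd 2 + Sd 1) = Sd 2
      rw [show b 1 = -(U⁻¹ * T) from b_odd 0]
      show -(U⁻¹*T) * (b 0 * R 1 + R 0) + 1 - T * (-(U⁻¹*T) * (b 0 * Sd 1 + Sd 0) + 0)
          = b 0 * Sd 1 + Sd 0
      rw [show b 0 = T from b_even 0]
      show -(U⁻¹*T) * (T * 1 + 0) + 1 - T * (-(U⁻¹*T) * (T * 0 + 1) + 0) = T * 0 + 1
      ring
  | succ m ih =>
    have hb2 : b (2*m+2) = T := by rw [show 2*m+2 = 2*(m+1) from by ring, b_even]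
    have hb3 : b (2*m+3) = -(U⁻¹ * T) := by rw [show 2*m+3 = 2*(m+1)+1 from by ring, b_odd]
    have e2 : Sd (2*m+3) = -(U⁻¹ * T) * Sd (2*m+2) + Sd (2*m+1) := by
      rw [show 2*m+3 = (2*m+1)+2 from rfl, Sd, b_odd]
    have eR4 : R (2*m+4) = T * R (2*m+3) + R (2*m+2) := by
      rw [show 2*m+4 = (2*m+2)+2 from rfl, R, hb2]
    have eS4 : Sd (2*m+4) = T * Sd (2*m+3) + Sd (2*m+2) := by
      rw [show 2*m+4 = (2*m+2)+2 from rfl, Sd, hb2]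
    have g1 : R (2*m+4) - T * Sd (2*m+4) = -(U * Sd (2*m+3)) := by
      linear_combination eR4 - T * eS4 + T * ih.2 + ih.1 + U * e2 - T * Sd (2*m+2) * hUU
    have eR5 : R (2*m+5) = -(U⁻¹ * T) * R (2*m+4) + R (2*m+3) := by
      rw [show 2*m+5 = (2*m+3)+2 from rfl, R, hb3]
    have eS5 : Sd (2*m+5) = -(U⁻¹ * T) * Sd (2*m+4) + Sd (2*m+3) := by
      rw [show 2*m+5 = (2*m+3)+2 from rfl, Sd, hb3]
    have g2 : R (2*m+5) - T * Sd (2*m+5) = Sd (2*m+4) := by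
      linear_combination eR5 - T * eS5 - (U⁻¹*T) * g1 + ih.2 - eS4 + T * Sd (2*m+3) * hUU
    constructor
    · rw [show 2*(m+1)+2 = 2*m+4 from by ring, show 2*(m+1)+1 = 2*m+3 from by ring]
      exact g1
    · rw [show 2*(m+1)+3 = 2*m+5 from by ring, show 2*(m+1)+2 = 2*m+4 from by ring]
      exact g2


/-- `r_{2^n-1}/s_{2^n-1} - T = s_{2^n-2}/s_{2^n-1}` for `n ≥ 1`, stated with the
index shift `R k = r_{k-2}`, `Sd k = s_{k-2}`. -/
theorem stmt_17 (n : ℕ) (hn : 1 ≤ n) :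
    R (2 ^ n + 1) / Sd (2 ^ n + 1) - T = Sd (2 ^ n) / Sd (2 ^ n + 1) := by
  have h2 : 2 ^ n = 2 * 2 ^ (n - 1) := by
    rw [← pow_succ']
    congr 1
    omega
  have hp : 1 ≤ 2 ^ (n - 1) := Nat.one_le_two_pow
  obtain ⟨k, hk⟩ : ∃ k, 2 ^ n = 2 * k + 2 := ⟨2 ^ (n - 1) - 1, by omega⟩
  rw [hk]
  have hS : Sd (2 * k + 2 + 1) ≠ 0 := by
    have := Sd_ne (k + 1) (by omega)
    rwa [show 2 * (k + 1) + 1 = 2 * k + 2 + 1 from by ring] at this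
  have hD := (D_pair k).2
  rw [show 2 * k + 3 = 2 * k + 2 + 1 from rfl] at hD
  field_simp [hS]
  linear_combination hD


end Paper
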